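/- If N is a normal subgroup of a finite group G, then d(G) ≤ d(G/N)·d(N). -/

import Mathlib

open scoped Classical
open Finset

private lemma cc_sum (M : Type*) [Mul M] [Fintype M] :
    Nat.card {p : M × M // Commute p.1 p.2} = ∑ x : M, Nat.card {y : M // Commute x y} := by
  rw [Nat.card_congr (Equiv.subtypeProdEquivSigmaSubtype (fun x y : M => Commute x y)),
    Nat.card_eq_fintype_card, Fintype.card_sigma]
  simp [Nat.card_eq_fintype_card]

private lemma comm_coe {G : Type*} [Group G] {N : Subgroup G} (a b : N) :
    Commute a b ↔ Commute (a : G) (b : G) :=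
  ⟨fun h => show (a : G) * b = (b : G) * a by exact_mod_cast congrArg Subtype.val h,
   fun h => Subtype.ext (show ((a*b : N) : G) = ((b*a : N) : G) by push_cast; exact h)⟩

private lemma sol_le {G : Type*} [Group G] [Finite G] (N : Subgroup G) (g : G) (m : N) :
    Nat.card {u : N // Commute (g * u) (m : G)} ≤ Nat.card {u : N // Commute (u : G) (m : G)} := by
  rcases isEmpty_or_nonempty {u : N // Commute (g * u) (m : G)} with h | ⟨⟨u₀, h₀⟩⟩
  · simp
  · refine Nat.card_le_card_of_injective (fun u => ⟨u₀⁻¹ * u.1, ?_⟩) ?_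
    · have key : Commute ((g * u₀)⁻¹ * (g * u.1)) (m : G) := h₀.inv_left.mul_left u.2
      have heq : ((g * u₀ : G))⁻¹ * (g * u.1) = ((u₀⁻¹ * u.1 : N) : G) := by
        push_cast; group
      rwa [heq] at key
    · intro a b hab
      exact Subtype.ext (mul_left_cancel (Subtype.mk_eq_mk.mp hab))

private lemma coset_le {G : Type*} [Group G] [Fintype G] (N : Subgroup G) (g : G) :
    ∑ u : N, Nat.card {n : N // Commute ((g * u : G)) (n : G)}
      ≤ Nat.card {p : N × N // Commute p.1 p.2} := by
  calc ∑ u : N, Nat.card {n : N // Commute ((g * u : G)) (n : G)}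
      = ∑ u : N, ∑ n : N, if Commute ((g * u : G)) (n : G) then 1 else 0 :=
        Finset.sum_congr rfl fun u _ => by
          rw [Nat.card_eq_fintype_card, Fintype.card_subtype, Finset.card_filter]
    _ = ∑ n : N, ∑ u : N, if Commute ((g * u : G)) (n : G) then 1 else 0 := Finset.sum_comm
    _ = ∑ n : N, Nat.card {u : N // Commute ((g * u : G)) (n : G)} :=
        Finset.sum_congr rfl fun n _ => by
          rw [Nat.card_eq_fintype_card, Fintype.card_subtype, Finset.card_filter]
    _ ≤ ∑ n : N, Nat.card {u : N // Commute (u : G) (n : G)} :=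
        Finset.sum_le_sum fun n _ => sol_le N g n
    _ = Nat.card {p : N × N // Commute p.1 p.2} := by
        rw [Nat.card_congr (Equiv.subtypeProdEquivSigmaSubtype (fun x y : N => Commute x y)),
          Nat.card_eq_fintype_card, Fintype.card_sigma]
        refine Finset.sum_congr rfl fun n _ => ?_
        rw [Nat.card_eq_fintype_card]
        refine Fintype.card_congr (Equiv.subtypeEquivRight fun u => ?_)
        exact ⟨fun h => (comm_coe n u).mpr h.symm, fun h => ((comm_coe n u).mp h).symm⟩

private lemma cent_le {G : Type*} [Group G] [Finite G] (N : Subgroup G) [N.Normal] (x : G) :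
    Nat.card {y : G // Commute x y} ≤
      Nat.card {q : G ⧸ N // Commute ((x : G ⧸ N)) q} * Nat.card {n : N // Commute x (n : G)} := by
  set H := Subgroup.centralizer {x} with hH
  have e1 : {y : G // Commute x y} ≃ H :=
    Equiv.subtypeEquivRight fun y => by
      rw [hH, Subgroup.mem_centralizer_singleton_iff]
      exact ⟨fun h => h.symm, fun h => h.symm⟩
  set f : H →* G ⧸ N := (QuotientGroup.mk' N).domRestrict H with hf
  have hcard : Nat.card H = Nat.card (H ⧸ f.ker) * Nat.card f.ker :=
    Subgroup.card_eq_card_quotient_mul_card_subgroup f.ker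
  have hrange : Nat.card (H ⧸ f.ker) = Nat.card f.range :=
    Nat.card_congr (QuotientGroup.quotientKerEquivRange f).toEquiv
  have hle : Nat.card f.range ≤ Nat.card {q : G ⧸ N // Commute ((x : G ⧸ N)) q} := by
    refine Nat.card_le_card_of_injective
      (fun r => ⟨r.1, ?_⟩) (fun a b hab => Subtype.ext (Subtype.mk_eq_mk.mp hab))
    obtain ⟨r, hr⟩ := r
    obtain ⟨h, rfl⟩ := hr
    exact Commute.map ((Subgroup.mem_centralizer_singleton_iff.mp h.2).symm :
      Commute x (h : G)) (QuotientGroup.mk' N)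
  have hker : Nat.card f.ker = Nat.card {n : N // Commute x (n : G)} := by
    apply Nat.card_congr
    exact ⟨fun k => ⟨⟨k.1.1, (QuotientGroup.eq_one_iff _).1 (MonoidHom.mem_ker.mp k.2)⟩,
        ((Subgroup.mem_centralizer_singleton_iff.mp k.1.2).symm : Commute x _)⟩,
      fun n => ⟨⟨n.1.1, Subgroup.mem_centralizer_singleton_iff.mpr n.2.symm⟩,
        MonoidHom.mem_ker.mpr ((QuotientGroup.eq_one_iff _).2 n.1.2)⟩,
      fun k => by ext; rfl, fun n => by ext; rfl⟩
  calc Nat.card {y : G // Commute x y} = Nat.card H := Nat.card_congr e1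
    _ = Nat.card (H ⧸ f.ker) * Nat.card f.ker := hcard
    _ = Nat.card f.range * Nat.card f.ker := by rw [hrange]
    _ ≤ _ := by rw [hker]; exact Nat.mul_le_mul_right _ hle

private noncomputable def cosetEquiv {G : Type*} [Group G] (N : Subgroup G) (q : G ⧸ N) :
    N ≃ {x : G // (x : G ⧸ N) = q} where
  toFun := fun u => ⟨q.out * u, by
    rw [QuotientGroup.mk_mul_of_mem q.out u.2]; exact QuotientGroup.out_eq' q⟩
  invFun := fun x => ⟨q.out⁻¹ * x.1, by
    have h : ((q.out : G ⧸ N)) = ((x.1 : G ⧸ N)) := (QuotientGroup.out_eq' q).trans x.2.symm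
    exact QuotientGroup.leftRel_apply.mp (Quotient.eq''.mp (by exact h))⟩
  left_inv := fun u => by ext; simp
  right_inv := fun x => by ext; simp

private lemma cc_le {G : Type*} [Group G] [Fintype G] (N : Subgroup G) [N.Normal] :
    Nat.card {p : G × G // Commute p.1 p.2} ≤
      Nat.card {p : (G ⧸ N) × (G ⧸ N) // Commute p.1 p.2} *
        Nat.card {p : N × N // Commute p.1 p.2} := by
  set A : G ⧸ N → ℕ := fun q => Nat.card {r : G ⧸ N // Commute q r} with hA
  set B : G → ℕ := fun x => Nat.card {n : N // Commute x (n : G)} with hB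
  have fiber_le : ∀ q : G ⧸ N, ∑ x ∈ univ.filter (fun x : G => (x : G ⧸ N) = q), B x
      ≤ Nat.card {p : N × N // Commute p.1 p.2} := by
    intro q
    calc ∑ x ∈ univ.filter (fun x : G => (x : G ⧸ N) = q), B x
        = ∑ x : {x : G // (x : G ⧸ N) = q}, B x.1 :=
          Finset.sum_subtype _ (by simp) B
      _ = ∑ u : N, B ((q.out * u : G)) := (Fintype.sum_equiv (cosetEquiv N q)
            (fun u => B ((q.out * u : G))) (fun x => B x.1) (fun u => rfl)).symm
      _ ≤ _ := coset_le N q.out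
  calc Nat.card {p : G × G // Commute p.1 p.2}
      = ∑ x : G, Nat.card {y : G // Commute x y} := cc_sum G
    _ ≤ ∑ x : G, A ((x : G ⧸ N)) * B x := Finset.sum_le_sum fun x _ => cent_le N x
    _ = ∑ q : G ⧸ N, ∑ x ∈ univ.filter (fun x : G => (x : G ⧸ N) = q), A ((x : G ⧸ N)) * B x :=
        (Finset.sum_fiberwise univ (fun x : G => (x : G ⧸ N)) _).symm
    _ = ∑ q : G ⧸ N, A q * ∑ x ∈ univ.filter (fun x : G => (x : G ⧸ N) = q), B x := by
        refine Finset.sum_congr rfl fun q _ => ?_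
        rw [Finset.mul_sum]
        refine Finset.sum_congr rfl fun x hx => ?_
        rw [(Finset.mem_filter.mp hx).2]
    _ ≤ ∑ q : G ⧸ N, A q * Nat.card {p : N × N // Commute p.1 p.2} :=
        Finset.sum_le_sum fun q _ => Nat.mul_le_mul_left _ (fiber_le q)
    _ = _ := by rw [← Finset.sum_mul, ← cc_sum (G ⧸ N)]

theorem commProb_le_commProb_quotient_mul_commProb
    (G : Type*) [Group G] [Finite G] (N : Subgroup G) [N.Normal] :
    commProb G ≤ commProb (G ⧸ N) * commProb N := by
  have : Fintype G := Fintype.ofFinite G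
  have hle : ((Nat.card {p : G × G // Commute p.1 p.2} : ℚ)) ≤
      (Nat.card {p : (G ⧸ N) × (G ⧸ N) // Commute p.1 p.2} : ℚ) *
        (Nat.card {p : N × N // Commute p.1 p.2} : ℚ) := by
    exact_mod_cast cc_le N
  have hG : ((Nat.card G : ℚ)) = (Nat.card (G ⧸ N) : ℚ) * (Nat.card N : ℚ) := by
    exact_mod_cast congrArg (fun n : ℕ => (n : ℚ))
      (Subgroup.card_eq_card_quotient_mul_card_subgroup N)
  rw [commProb_def, commProb_def, commProb_def, div_mul_div_comm, hG, mul_pow]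
  gcongr
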